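/- For every integer p ≥ 2, the split graph Q₂(p) satisfies χ_rlid(Q₂(p)) = p + 1 = ω(Q₂(p)) + 1; in particular ω(Q₂(p)) = p. -/
import Mathlib


open SimpleGraph Set

variable {V : Type*}

/-- The closed neighborhood of a vertex. -/
def closedNbhd (G : SimpleGraph V) (v : V) : Set V := insert v (G.neighborSet v)

/-- A (not necessarily proper) coloring `c : V → Fin k` is a relaxed locally identifying coloring
(rlid-coloring) if any two adjacent vertices with distinct closed neighborhoods receive distinct
sets of colors on their closed neighborhoods. -/
def IsRlidColoring (G : SimpleGraph V) {k : ℕ} (c : V → Fin k) : Prop :=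
  ∀ u v : V, G.Adj u v → closedNbhd G u ≠ closedNbhd G v →
    c '' closedNbhd G u ≠ c '' closedNbhd G v

/-- The relaxed locally identifying chromatic number: the least `k` such that `G` admits an
rlid-coloring with `k` colors. -/
noncomputable def rlidChromNum (G : SimpleGraph V) : ℕ :=
  sInf {k : ℕ | ∃ c : V → Fin k, IsRlidColoring G c}

/-- A graph is twin-free if distinct vertices have distinct closed neighborhoods. -/
def TwinFree (G : SimpleGraph V) : Prop :=
  ∀ u v : V, closedNbhd G u = closedNbhd G v → u = v

/-- The split graph `Q₂(p)`: the clique is `{v_1, …, v_p}` (encoded as `Sum.inl i`), the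
independent set is `{s_1, …, s_{p−1}}` (encoded as `Sum.inr j`), and the only edges between
them are `v_i s_i` for `i = 1, …, p−1`. -/
def Q2graph (p : ℕ) : SimpleGraph (Fin p ⊕ Fin (p - 1)) :=
  SimpleGraph.fromRel (fun x y =>
    match x, y with
    | Sum.inl i, Sum.inl j => i ≠ j
    | Sum.inl i, Sum.inr j => (i : ℕ) = (j : ℕ)
    | _, _ => False)

lemma adj_ll {p : ℕ} {i j : Fin p} : (Q2graph p).Adj (.inl i) (.inl j) ↔ i ≠ j := by
  simp [Q2graph, fromRel_adj]; tauto

lemma adj_lr {p : ℕ} {i : Fin p} {j : Fin (p-1)} :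
    (Q2graph p).Adj (.inl i) (.inr j) ↔ (i : ℕ) = (j : ℕ) := by
  simp [Q2graph, fromRel_adj]

lemma adj_rl {p : ℕ} {i : Fin p} {j : Fin (p-1)} :
    (Q2graph p).Adj (.inr j) (.inl i) ↔ (i : ℕ) = (j : ℕ) := by
  simp [Q2graph, fromRel_adj]

lemma adj_rr {p : ℕ} {j j' : Fin (p-1)} : ¬ (Q2graph p).Adj (.inr j) (.inr j') := by
  simp [Q2graph, fromRel_adj]

def jc {p : ℕ} (j : Fin (p-1)) : Fin p := ⟨j.1, j.2.trans_le (Nat.sub_le p 1)⟩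

lemma mem_cn {V : Type*} {G : SimpleGraph V} {v x : V} :
    x ∈ closedNbhd G v ↔ x = v ∨ G.Adj v x := by
  simp [closedNbhd]

lemma cn_inr {p : ℕ} (j : Fin (p-1)) :
    closedNbhd (Q2graph p) (.inr j) = {Sum.inr j, Sum.inl (jc j)} := by
  ext x
  rcases x with i | j'
  · simp [mem_cn, adj_rl, jc, Fin.ext_iff, eq_comm]
  · simp [mem_cn, adj_rr]

lemma cn_inl' {p : ℕ} (i : Fin p) (h : (i : ℕ) < p - 1) :
    closedNbhd (Q2graph p) (.inl i) = insert (Sum.inr ⟨i.1, h⟩) (Set.range Sum.inl) := by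
  ext x
  rcases x with i' | j'
  · simp only [mem_cn, mem_insert_iff, mem_range]
    constructor
    · intro _; right; exact ⟨i', rfl⟩
    · intro _
      by_cases hii : i' = i
      · left; exact congrArg Sum.inl hii
      · right; exact adj_ll.mpr (Ne.symm hii)
  · simp only [mem_cn, mem_insert_iff, mem_range, adj_lr]
    constructor
    · rintro (h1 | h1)
      · exact absurd h1 (by simp)
      · left; exact congrArg Sum.inr (Fin.ext h1.symm)
    · rintro (h1 | ⟨i'', h1⟩)
      · rw [Sum.inr.injEq] at h1; right; rw [h1]
      · exact absurd h1 (by simp)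

lemma cn_inl_last {p : ℕ} (i : Fin p) (h : ¬ (i : ℕ) < p - 1) :
    closedNbhd (Q2graph p) (.inl i) = Set.range Sum.inl := by
  ext x
  rcases x with i' | j'
  · simp only [mem_cn, mem_range]
    constructor
    · intro _; exact ⟨i', rfl⟩
    · intro _
      by_cases hii : i' = i
      · left; exact congrArg Sum.inl hii
      · right; exact adj_ll.mpr (Ne.symm hii)
  · simp only [mem_cn, mem_range, adj_lr]
    constructor
    · rintro (h1 | h1)
      · exact absurd h1 (by simp)
      · exact absurd (h1 ▸ j'.2) h
    · rintro ⟨i'', h1⟩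
      exact absurd h1 (by simp)

lemma cn_jc {p : ℕ} (j : Fin (p-1)) :
    closedNbhd (Q2graph p) (.inl (jc j)) = insert (Sum.inr j) (Set.range Sum.inl) :=
  cn_inl' (jc j) j.2

lemma rlid_lower {p k : ℕ} (hp : 2 ≤ p) (c : Fin p ⊕ Fin (p-1) → Fin k)
    (hc : IsRlidColoring (Q2graph p) c) : p + 1 ≤ k := by
  classical
  set A : Set (Fin k) := c '' Set.range Sum.inl with hA
  set last : Fin p := ⟨p-1, by omega⟩ with hlastdef
  have hlast : ¬ ((last : Fin p) : ℕ) < p - 1 := by simp [hlastdef]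
  have hcnlast := cn_inl_last (p := p) last hlast
  have hne_jclast : ∀ j : Fin (p-1), jc j ≠ last := by
    intro j h
    have h2 := congrArg Fin.val h
    simp only [jc, hlastdef] at h2
    have := j.2; omega
  have fact1 : ∀ j : Fin (p-1), c (Sum.inr j) ∉ A := by
    intro j hmem
    refine hc (.inl (jc j)) (.inl last) (adj_ll.mpr (hne_jclast j)) ?_ ?_
    · rw [cn_jc, hcnlast]
      intro h
      have : (Sum.inr j : Fin p ⊕ Fin (p-1)) ∈ Set.range Sum.inl :=
        h ▸ Set.mem_insert _ _
      simp at this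
    · rw [cn_jc, hcnlast, Set.image_insert_eq, ← hA]
      exact Set.insert_eq_self.mpr hmem
  have fact2 : ∀ j j' : Fin (p-1), j ≠ j' → c (Sum.inr j) ≠ c (Sum.inr j') := by
    intro j j' hjj hcc
    refine hc (.inl (jc j)) (.inl (jc j'))
      (adj_ll.mpr (fun h => hjj (by have h2 := congrArg Fin.val h; exact Fin.ext h2))) ?_ ?_
    · rw [cn_jc, cn_jc]
      intro h
      have : (Sum.inr j : Fin p ⊕ Fin (p-1)) ∈
          insert (Sum.inr j') (Set.range Sum.inl) := h ▸ Set.mem_insert _ _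
      rcases this with h1 | h1
      · exact hjj (Sum.inr.inj h1)
      · simp at h1
    · rw [cn_jc, cn_jc, Set.image_insert_eq, Set.image_insert_eq, hcc]
  have fact3 : ∃ i : Fin p, c (.inl i) ≠ c (.inl ⟨0, by omega⟩) := by
    by_contra h
    push_neg at h
    have hAeq : A = {c (.inl ⟨0, by omega⟩)} := by
      apply Set.Subset.antisymm
      · rintro y ⟨x, ⟨i, rfl⟩, rfl⟩
        exact h i
      · rintro y rfl
        exact ⟨.inl ⟨0, by omega⟩, ⟨_, rfl⟩, rfl⟩
    set j0 : Fin (p-1) := ⟨0, by omega⟩ with hj0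
    refine hc (.inr j0) (.inl (jc j0)) (adj_rl.mpr rfl) ?_ ?_
    · rw [cn_inr, cn_jc]
      intro heq
      have hmem : (Sum.inl last : Fin p ⊕ Fin (p-1)) ∈
          ({Sum.inr j0, Sum.inl (jc j0)} : Set (Fin p ⊕ Fin (p-1))) := by
        rw [heq]
        exact Set.mem_insert_of_mem _ ⟨last, rfl⟩
      rcases hmem with h1 | h1
      · simp at h1
      · exact hne_jclast j0 (Sum.inl.inj h1).symm
    · rw [cn_inr, cn_jc, Set.image_insert_eq, Set.image_insert_eq, ← hA, hAeq,
        Set.image_singleton, h (jc j0)]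
  obtain ⟨i1, hi1⟩ := fact3
  set i0 : Fin p := ⟨0, by omega⟩ with hi0def
  have h0A : c (.inl i0) ∈ A := ⟨.inl i0, ⟨i0, rfl⟩, rfl⟩
  have h1A : c (.inl i1) ∈ A := ⟨.inl i1, ⟨i1, rfl⟩, rfl⟩
  set img : Finset (Fin k) := Finset.image (fun j => c (.inr j)) Finset.univ with himgdef
  have himg_card : img.card = p - 1 := by
    rw [himgdef, Finset.card_image_of_injective _
      (fun j j' h => by by_contra hne; exact fact2 j j' hne h)]
    simp
  have hnotmem1 : c (.inl i1) ∉ img := by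
    intro hmem
    rw [himgdef, Finset.mem_image] at hmem
    obtain ⟨j, _, hj⟩ := hmem
    exact fact1 j (hj ▸ h1A)
  have hnotmem0 : c (.inl i0) ∉ insert (c (.inl i1)) img := by
    intro hmem
    rcases Finset.mem_insert.mp hmem with h1 | h1
    · exact hi1 h1.symm
    · rw [himgdef, Finset.mem_image] at h1
      obtain ⟨j, _, hj⟩ := h1
      exact fact1 j (hj ▸ h0A)
  have hcard : (insert (c (.inl i0)) (insert (c (.inl i1)) img)).card = p + 1 := by
    rw [Finset.card_insert_of_notMem hnotmem0, Finset.card_insert_of_notMem hnotmem1,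
      himg_card]
    omega
  have hle := Finset.card_le_univ (insert (c (.inl i0)) (insert (c (.inl i1)) img))
  rw [hcard] at hle
  simpa using hle

def col (p : ℕ) : Fin p ⊕ Fin (p-1) → Fin (p+1)
  | .inl i => if i.1 = 0 then ⟨0, by omega⟩ else ⟨1, by have := i.2; omega⟩
  | .inr j => ⟨j.1+2, by have := j.2; omega⟩

lemma col_inl_le {p : ℕ} (i : Fin p) : (col p (.inl i)).1 ≤ 1 := by
  simp only [col]; split <;> simp

lemma col_inr_val {p : ℕ} (j : Fin (p-1)) : (col p (.inr j)).1 = j.1 + 2 := rfl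

lemma mem_image_range_inl {p : ℕ} (i : Fin p) :
    col p (.inl i) ∈ col p '' Set.range Sum.inl := ⟨.inl i, ⟨i, rfl⟩, rfl⟩

lemma upper_helper {p : ℕ} (hp : 2 ≤ p) (j : Fin (p-1)) :
    col p '' closedNbhd (Q2graph p) (.inl (jc j)) ≠
      col p '' closedNbhd (Q2graph p) (.inr j) := by
  rw [cn_jc, cn_inr, Set.image_insert_eq, Set.image_pair]
  set w : Fin (p+1) :=
    if j.1 = 0 then col p (.inl ⟨1, by omega⟩) else col p (.inl ⟨0, by omega⟩) with hw
  have hwle : w.1 ≤ 1 := by rw [hw]; split <;> exact col_inl_le _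
  have hwA : w ∈ col p '' Set.range Sum.inl := by
    rw [hw]; split <;> exact mem_image_range_inl _
  intro heq
  have hwmem : w ∈ ({col p (.inr j), col p (.inl (jc j))} : Set (Fin (p+1))) :=
    heq ▸ Set.mem_insert_of_mem _ hwA
  rcases hwmem with h1 | h1
  · have := congrArg Fin.val h1
    rw [col_inr_val] at this
    omega
  · have hv := congrArg Fin.val h1
    by_cases hj0 : j.1 = 0
    · rw [hw] at hv
      simp only [hj0, if_pos] at hv
      have h2 : (col p (.inl (⟨1, by omega⟩ : Fin p))).1 = 1 := by simp [col]
      have h3 : (col p (.inl (jc j))).1 = 0 := by simp [col, jc, hj0]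
      omega
    · rw [hw] at hv
      simp only [hj0, if_neg, if_false] at hv
      have h2 : (col p (.inl (⟨0, by omega⟩ : Fin p))).1 = 0 := by simp [col]
      have h3 : (col p (.inl (jc j))).1 = 1 := by simp [col, jc, hj0]
      omega

lemma rlid_upper {p : ℕ} (hp : 2 ≤ p) : IsRlidColoring (Q2graph p) (col p) := by
  intro u v hadj hne
  rcases u with i | j <;> rcases v with i' | j'
  · have hii : i ≠ i' := adj_ll.mp hadj
    by_cases h1 : (i : ℕ) < p - 1 <;> by_cases h2 : (i' : ℕ) < p - 1
    · rw [cn_inl' i h1, cn_inl' i' h2, Set.image_insert_eq, Set.image_insert_eq]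
      intro heq
      have hm : col p (.inr ⟨i.1, h1⟩) ∈
          insert (col p (.inr ⟨i'.1, h2⟩)) (col p '' Set.range Sum.inl) :=
        heq ▸ Set.mem_insert _ _
      rcases hm with h3 | h3
      · have := congrArg Fin.val h3
        rw [col_inr_val, col_inr_val] at this
        have h5 : (i : ℕ) + 2 = (i' : ℕ) + 2 := this
        exact hii (Fin.ext (by omega))
      · obtain ⟨x, ⟨i'', rfl⟩, hx⟩ := h3
        have := congrArg Fin.val hx
        rw [col_inr_val] at this
        have := col_inl_le (p := p) i''
        omega
    · rw [cn_inl' i h1, cn_inl_last i' h2, Set.image_insert_eq]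
      intro heq
      have hm : col p (.inr ⟨i.1, h1⟩) ∈ col p '' Set.range Sum.inl :=
        heq ▸ Set.mem_insert _ _
      obtain ⟨x, ⟨i'', rfl⟩, hx⟩ := hm
      have := congrArg Fin.val hx
      rw [col_inr_val] at this
      have := col_inl_le (p := p) i''
      omega
    · rw [cn_inl_last i h1, cn_inl' i' h2, Set.image_insert_eq]
      intro heq
      have hm : col p (.inr ⟨i'.1, h2⟩) ∈ col p '' Set.range Sum.inl := by
        rw [heq]; exact Set.mem_insert _ _
      obtain ⟨x, ⟨i'', rfl⟩, hx⟩ := hm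
      have := congrArg Fin.val hx
      rw [col_inr_val] at this
      have := col_inl_le (p := p) i''
      omega
    · exact absurd (Fin.ext (by have := i.2; have := i'.2; omega)) hii
  · have hij : i = jc j' := Fin.ext (adj_lr.mp hadj)
    rw [hij]
    exact upper_helper hp j'
  · have hij : i' = jc j := Fin.ext (adj_rl.mp hadj)
    rw [hij]
    exact (upper_helper hp j).symm
  · exact absurd hadj adj_rr

lemma clique_bound {p n : ℕ} (hp : 2 ≤ p) {s : Finset (Fin p ⊕ Fin (p-1))}
    (h : (Q2graph p).IsNClique n s) : n ≤ p := by
  rcases h with ⟨hcl, hcard⟩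
  subst hcard
  by_cases hex : ∃ j : Fin (p-1), Sum.inr j ∈ s
  · obtain ⟨j, hj⟩ := hex
    have hsub : s ⊆ {Sum.inr j, Sum.inl ⟨j.1, j.2.trans_le (Nat.sub_le p 1)⟩} := by
      intro x hx
      by_cases hxj : x = Sum.inr j
      · simp [hxj]
      · have hadj := hcl hx hj hxj
        rcases x with i | j'
        · simp only [Finset.mem_insert, Finset.mem_singleton]
          right
          have := adj_lr.mp hadj
          exact congrArg Sum.inl (Fin.ext this)
        · exact absurd hadj adj_rr
    calc s.card ≤ _ := Finset.card_le_card hsub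
    _ ≤ 2 := Finset.card_insert_le _ _ |>.trans (by simp)
    _ ≤ p := hp
  · push_neg at hex
    have hsub : s ⊆ Finset.univ.image Sum.inl := by
      intro x hx
      rcases x with i | j'
      · simp
      · exact absurd hx (hex j')
    calc s.card ≤ _ := Finset.card_le_card hsub
    _ ≤ p := by
        refine (Finset.card_image_le).trans ?_
        simp

lemma clique_exists {p : ℕ} :
    (Q2graph p).IsNClique p ((Finset.univ : Finset (Fin p)).image Sum.inl) := by
  constructor
  · intro x hx y hy hxy
    simp only [Finset.coe_image, Set.mem_image, Finset.coe_univ, Set.mem_univ, true_and] at hx hy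
    obtain ⟨i, rfl⟩ := hx
    obtain ⟨i', rfl⟩ := hy
    exact adj_ll.mpr (fun h => hxy (congrArg Sum.inl h))
  · rw [Finset.card_image_of_injective _ Sum.inl_injective]; simp

lemma cliqueNum_Q2 {p : ℕ} (hp : 2 ≤ p) : (Q2graph p).cliqueNum = p := by
  apply le_antisymm
  · exact csSup_le ⟨0, ∅, by simp [isNClique_empty]⟩
      (fun n ⟨s, hs⟩ => clique_bound hp hs)
  · exact le_csSup ⟨p, fun n ⟨s, hs⟩ => clique_bound hp hs⟩ ⟨_, clique_exists⟩

/-- For every `p ≥ 2`, `χ_rlid(Q₂(p)) = p + 1 = ω(Q₂(p)) + 1`, with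
`ω(Q₂(p)) = p`. -/
theorem rlid_Q2 (p : ℕ) (hp : 2 ≤ p) :
    rlidChromNum (Q2graph p) = p + 1 ∧ (Q2graph p).cliqueNum = p := by
  refine ⟨?_, cliqueNum_Q2 hp⟩
  have hmem : p + 1 ∈ {k : ℕ | ∃ c : Fin p ⊕ Fin (p-1) → Fin k, IsRlidColoring (Q2graph p) c} :=
    ⟨col p, rlid_upper hp⟩
  exact le_antisymm (Nat.sInf_le hmem)
    (le_csInf ⟨_, hmem⟩ (fun k hk => by obtain ⟨c, hc⟩ := hk; exact rlid_lower hp c hc))
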